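/- (Validity of the modified critical-path lower bound ModCP.) Let v_1, v_2, …, v_k be an r-path and let 1 < i < k be an index such that the task v_i belongs to a stage S ⊆ V with all-to-all dependencies to its path neighbors: r v_{i-1} u and r u v_{i+1} hold for every u ∈ S. Then for every schedule σ respecting precedence and capacity, the makespan of σ is at least Σ_{j≠i} dur(v_j) + max( max_{u∈S} dur(u), TWork(S) ). -/

import Mathlib

/-- Total work of the tasks in `S`, normalized by the capacity `C`. -/
noncomputable def TWork {V : Type*} (dur dem : V → ℝ) (C : ℝ) (S : Finset V) : ℝ :=
  (∑ v ∈ S, dur v * dem v) / C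

open MeasureTheory

open scoped Classical in
lemma work_bound {V : Type*} (dur dem : V → ℝ) (C : ℝ) (σ : V → ℝ)
    (hdur : ∀ v, 0 ≤ dur v)
    (S : Finset V) (A B : ℝ) (hAB : A ≤ B)
    (hA : ∀ u ∈ S, A ≤ σ u) (hB : ∀ u ∈ S, σ u + dur u ≤ B)
    (hcapS : ∀ t : ℝ, ∑ u ∈ S.filter (fun u => σ u ≤ t ∧ t < σ u + dur u), dem u ≤ C) :
    ∑ u ∈ S, dur u * dem u ≤ C * (B - A) := by
  set g : V → ℝ → ℝ := fun u => (Set.Ico (σ u) (σ u + dur u)).indicator fun _ => dem u with hg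
  have hint : ∀ u, Integrable (g u) := by
    intro u
    rw [hg]
    rw [integrable_indicator_iff measurableSet_Ico]
    refine integrableOn_const ?_
    rw [Real.volume_Ico]
    exact ENNReal.ofReal_ne_top
  have hval : ∀ u ∈ S, ∫ t in A..B, g u t = dur u * dem u := by
    intro u hu
    rw [intervalIntegral.integral_of_le hAB,
      MeasureTheory.setIntegral_indicator measurableSet_Ico,
      MeasureTheory.setIntegral_const]
    have hvol : volume (Set.Ioc A B ∩ Set.Ico (σ u) (σ u + dur u))
        = ENNReal.ofReal (dur u) := by
      apply le_antisymm
      · calc volume (Set.Ioc A B ∩ Set.Ico (σ u) (σ u + dur u))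
            ≤ volume (Set.Icc (σ u) (σ u + dur u)) :=
              measure_mono (Set.inter_subset_right.trans Set.Ico_subset_Icc_self)
          _ = ENNReal.ofReal (dur u) := by rw [Real.volume_Icc, add_sub_cancel_left]
      · calc ENNReal.ofReal (dur u)
            = volume (Set.Ioo (σ u) (σ u + dur u)) := by
              rw [Real.volume_Ioo, add_sub_cancel_left]
          _ ≤ _ := by
              refine measure_mono fun t ht => ?_
              obtain ⟨h1, h2⟩ := ht
              exact ⟨⟨lt_of_le_of_lt (hA u hu) h1, h2.le.trans (hB u hu)⟩, h1.le, h2⟩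
    rw [measureReal_def, hvol, ENNReal.toReal_ofReal (hdur u), smul_eq_mul]
  have hsum : ∑ u ∈ S, dur u * dem u = ∫ t in A..B, ∑ u ∈ S, g u t := by
    rw [intervalIntegral.integral_finset_sum (fun u _ => (hint u).intervalIntegrable)]
    exact (Finset.sum_congr rfl hval).symm
  have hpt : ∀ t ∈ Set.Icc A B, ∑ u ∈ S, g u t ≤ C := by
    intro t _
    have h1 : ∑ u ∈ S, g u t
        = ∑ u ∈ S.filter (fun u => σ u ≤ t ∧ t < σ u + dur u), dem u := by
      rw [Finset.sum_filter]
      refine Finset.sum_congr rfl fun u _ => ?_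
      simp only [hg, Set.indicator_apply, Set.mem_Ico]
    rw [h1]; exact hcapS t
  calc ∑ u ∈ S, dur u * dem u = ∫ t in A..B, ∑ u ∈ S, g u t := hsum
    _ ≤ ∫ _ in A..B, C :=
        intervalIntegral.integral_mono_on hAB
          ((integrable_finset_sum S (fun u _ => hint u)).intervalIntegrable)
          intervalIntegrable_const hpt
    _ = (B - A) * C := by rw [intervalIntegral.integral_const, smul_eq_mul]
    _ = C * (B - A) := mul_comm _ _

open scoped Classical in
/-- **Validity of the modified critical-path lower bound `ModCP`.**
Let `v 0, …, v k` be an `r`-path and `0 < i < k` an index such that `v i`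
belongs to a stage `S` whose tasks all satisfy `r (v (i-1)) u` and
`r u (v (i+1))`. Then for every schedule `σ` respecting precedence and
capacity, the makespan of `σ` is at least
`∑_{j ≠ i} dur (v j) + max (max_{u ∈ S} dur u) (TWork S)`. -/
theorem modCP_valid {V : Type*} [Fintype V] [Nonempty V]
    (r : V → V → Prop) (dur dem : V → ℝ) (C : ℝ) (σ : V → ℝ)
    (hdur : ∀ v, 0 ≤ dur v) (hdem : ∀ v, 0 ≤ dem v) (hC : 0 < C)
    (hσ : ∀ v, 0 ≤ σ v)
    (hprec : ∀ u v, r u v → σ u + dur u ≤ σ v)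
    (hcap : ∀ t : ℝ,
      ∑ w ∈ Finset.univ.filter (fun w => σ w ≤ t ∧ t < σ w + dur w), dem w ≤ C)
    (k : ℕ) (v : Fin (k + 1) → V)
    (hpath : ∀ j : Fin k, r (v j.castSucc) (v j.succ))
    (i : ℕ) (hi0 : 0 < i) (hik : i < k)
    (S : Finset V) (hSne : S.Nonempty)
    (hvS : v ⟨i, by omega⟩ ∈ S)
    (hall : ∀ u ∈ S,
      r (v ⟨i - 1, by omega⟩) u ∧ r u (v ⟨i + 1, by omega⟩)) :
    (∑ j ∈ Finset.univ.filter (fun j : Fin (k + 1) => (j : ℕ) ≠ i), dur (v j)) +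
        max (S.sup' hSne dur) (TWork dur dem C S) ≤
      Finset.univ.sup' Finset.univ_nonempty (fun w => σ w + dur w) := by
  simp only [TWork]
  -- the path as an ℕ-indexed function
  set w : ℕ → V := fun j => v ⟨min j k, by omega⟩ with hw
  have hwv : ∀ (j : ℕ) (hj : j < k + 1), w j = v ⟨j, hj⟩ := by
    intro j hj
    simp only [hw]
    congr 1
    exact Fin.ext (by simp; omega)
  have hpath' : ∀ j, j < k → r (w j) (w (j + 1)) := by
    intro j hj
    rw [hwv j (by omega), hwv (j + 1) (by omega)]
    exact hpath ⟨j, hj⟩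
  have hchain : ∀ n, n ≤ k → ∀ m, m ≤ n →
      σ (w m) + ∑ l ∈ Finset.Ico m n, dur (w l) ≤ σ (w n) := by
    intro n
    induction n with
    | zero => intro _ m hm; interval_cases m; simp
    | succ n ih =>
      intro hn m hm
      rcases Nat.lt_or_ge m (n + 1) with h | h
      · have hmn : m ≤ n := by omega
        rw [Finset.sum_Ico_succ_top hmn]
        have h1 := ih (by omega) m hmn
        have h2 := hprec _ _ (hpath' n (by omega))
        linarith
      · have : m = n + 1 := by omega
        subst this; simp
  -- bounds A and B
  set A : ℝ := σ (w (i - 1)) + dur (w (i - 1)) with hA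
  set B : ℝ := σ (w (i + 1)) with hB
  have hAu : ∀ u ∈ S, A ≤ σ u := by
    intro u hu
    rw [hA, hwv (i - 1) (by omega)]
    exact hprec _ _ (hall u hu).1
  have hBu : ∀ u ∈ S, σ u + dur u ≤ B := by
    intro u hu
    rw [hB, hwv (i + 1) (by omega)]
    exact hprec _ _ (hall u hu).2
  have hAB : A ≤ B := by
    have h1 := hAu _ hvS
    have h2 := hBu _ hvS
    have := hdur (v ⟨i, by omega⟩)
    linarith
  -- max term ≤ B - A
  have hmax : max (S.sup' hSne dur) ((∑ v ∈ S, dur v * dem v) / C) ≤ B - A := by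
    apply max_le
    · refine Finset.sup'_le _ _ fun u hu => ?_
      have h1 := hAu u hu; have h2 := hBu u hu; linarith
    · rw [div_le_iff₀ hC]
      have hwork : ∑ u ∈ S, dur u * dem u ≤ C * (B - A) :=
        work_bound dur dem C σ hdur S A B hAB hAu hBu (fun t => by
          refine le_trans (Finset.sum_le_sum_of_subset_of_nonneg
            (Finset.filter_subset_filter _ (Finset.subset_univ S))
            (fun u _ _ => hdem u)) (hcap t))
      linarith [mul_comm C (B - A)]
  -- sums over ranges
  have hsum1 : σ (w 0) + ∑ l ∈ Finset.Ico 0 i, dur (w l) ≤ A := by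
    have h1 := hchain (i - 1) (by omega) 0 (by omega)
    have h2 : Finset.Ico 0 i = Finset.Ico 0 (i - 1 + 1) := by congr 1; omega
    rw [h2, Finset.sum_Ico_succ_top (by omega)]
    rw [hA]; linarith
  have hsum2 : B + ∑ l ∈ Finset.Ico (i + 1) (k + 1), dur (w l) ≤
      σ (w k) + dur (w k) := by
    have h1 := hchain k (le_refl k) (i + 1) (by omega)
    rw [Finset.sum_Ico_succ_top (by omega : i + 1 ≤ k)]
    rw [hB]; linarith
  -- the filtered sum
  have hfilt : (∑ j ∈ Finset.univ.filter (fun j : Fin (k + 1) => (j : ℕ) ≠ i), dur (v j))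
      = ∑ l ∈ Finset.Ico 0 i, dur (w l) + ∑ l ∈ Finset.Ico (i + 1) (k + 1), dur (w l) := by
    have huniv : ∑ j : Fin (k + 1), dur (v j) = ∑ l ∈ Finset.range (k + 1), dur (w l) := by
      rw [← Fin.sum_univ_eq_sum_range (fun l => dur (w l)) (k + 1)]
      refine Finset.sum_congr rfl fun j _ => ?_
      rw [hwv j.val j.isLt]
    have hsplit := Finset.sum_filter_add_sum_filter_not Finset.univ
      (fun j : Fin (k + 1) => (j : ℕ) ≠ i) (fun j => dur (v j))
    have hsingle : Finset.univ.filter (fun j : Fin (k + 1) => ¬ (j : ℕ) ≠ i)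
        = {(⟨i, by omega⟩ : Fin (k + 1))} := by
      ext j
      simp [Fin.ext_iff]
    have hrange : ∑ l ∈ Finset.range (k + 1), dur (w l)
        = ∑ l ∈ Finset.Ico 0 i, dur (w l) + dur (w i)
            + ∑ l ∈ Finset.Ico (i + 1) (k + 1), dur (w l) := by
      rw [Finset.range_eq_Ico,
        ← Finset.sum_Ico_consecutive _ (by omega : 0 ≤ i + 1) (by omega : i + 1 ≤ k + 1),
        Finset.sum_Ico_succ_top (by omega : 0 ≤ i)]
    have hwi : dur (w i) = dur (v ⟨i, by omega⟩) := by rw [hwv i (by omega)]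
    rw [hsingle, Finset.sum_singleton] at hsplit
    rw [huniv, hrange, hwi] at hsplit
    linarith
  have hmk : σ (w k) + dur (w k) ≤
      Finset.univ.sup' Finset.univ_nonempty (fun w => σ w + dur w) :=
    Finset.le_sup' (fun u => σ u + dur u) (Finset.mem_univ (w k))
  have hσ0 := hσ (w 0)
  rw [hfilt]
  linarith
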